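/- (Affine Flanders inequality) Let F be a field and n, p, r non-negative integers with n ≥ p ≥ r. If 𝒱 is an affine subspace of Mat_{n,p}(F) in which every matrix has rank at most r, then dim_F 𝒱 ≤ nr. -/

import Mathlib

open Module

namespace AffFl

variable {F : Type*} [Field F]

lemma finrank_split {M N : Type*} [AddCommGroup M] [Module F M] [AddCommGroup N] [Module F N]
    [FiniteDimensional F M] (f : M →ₗ[F] N) (V : Submodule F M) :
    finrank F V = finrank F ↥(V.map f) + finrank F ↥(V ⊓ LinearMap.ker f) := by
  have h := LinearMap.finrank_range_add_finrank_ker (f.domRestrict V)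
  rw [LinearMap.range_domRestrict, LinearMap.ker_domRestrict] at h
  have h3 : finrank F ((LinearMap.ker f).comap V.subtype)
      = finrank F ↥(V ⊓ LinearMap.ker f) := by
    rw [← Submodule.map_comap_subtype, Submodule.finrank_map_subtype_eq]
  omega

end AffFl

namespace AffFl

open Matrix
variable {F : Type*} [Field F] {m k n q : ℕ}

lemma rank_def (A : Matrix (Fin n) (Fin q) F) :
    A.rank = finrank F ↥(LinearMap.range A.mulVecLin) := rfl

lemma col_mem_colspan (C : Matrix (Fin n) (Fin q) F) (j : Fin q) :
    Cᵀ j ∈ LinearMap.range C.mulVecLin :=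
  ⟨Pi.single j 1, by simp [Matrix.mulVecLin_apply, Matrix.mulVec_single_one]; rfl⟩

lemma colspan_drop_le (C : Matrix (Fin n) (Fin (k+1)) F) :
    LinearMap.range (C.submatrix id Fin.castSucc).mulVecLin ≤ LinearMap.range C.mulVecLin := by
  rintro x ⟨y, rfl⟩
  refine ⟨Fin.snoc y 0, ?_⟩
  ext i
  simp [Matrix.mulVecLin_apply, Matrix.mulVec, dotProduct, Fin.sum_univ_castSucc]

lemma colspan_absorb (C N : Matrix (Fin n) (Fin (k+1)) F)
    (hN : N.submatrix id Fin.castSucc = 0)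
    (hr : (C + N).rank ≤ (C.submatrix id Fin.castSucc).rank) :
    LinearMap.range (C.submatrix id Fin.castSucc).mulVecLin
      = LinearMap.range (C + N).mulVecLin := by
  have hsub : (C + N).submatrix id Fin.castSucc = C.submatrix id Fin.castSucc := by
    ext i j
    have := congrFun (congrFun hN i) j
    simp only [Matrix.submatrix_apply, Matrix.zero_apply, id_eq] at this ⊢
    simp [Matrix.add_apply, this]
  have hle : LinearMap.range (C.submatrix id Fin.castSucc).mulVecLin
      ≤ LinearMap.range (C + N).mulVecLin := by
    rw [← hsub]; exact colspan_drop_le _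
  exact Submodule.eq_of_le_of_finrank_le hle hr

end AffFl

namespace AffFl

open Matrix
variable {F : Type*} [Field F] {m k : ℕ}

lemma rank_ul (C : Matrix (Fin (m+1)) (Fin (k+1)) F)
    (hrow : C (Fin.last m) = Pi.single (Fin.last k) 1) :
    (C.submatrix Fin.castSucc Fin.castSucc).rank + 1 ≤ C.rank := by
  classical
  set U := C.submatrix Fin.castSucc Fin.castSucc with hU
  let ι : (Fin m → F) →ₗ[F] (Fin (m+1) → F) :=
    { toFun := fun x => Fin.snoc x 0
      map_add' := by
        intro x y; ext i
        refine Fin.lastCases ?_ (fun i => ?_) i <;> simp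
      map_smul' := by
        intro c x; ext i
        refine Fin.lastCases ?_ (fun i => ?_) i <;> simp }
  have hinj : Function.Injective ι := by
    intro x y h
    funext i
    have := congrFun h (Fin.castSucc i)
    simpa [ι] using this
  set S := (LinearMap.range U.mulVecLin).map ι with hS
  have hS_le : S ≤ LinearMap.range C.mulVecLin := by
    rintro x ⟨y, ⟨z, rfl⟩, rfl⟩
    refine ⟨Fin.snoc z 0, ?_⟩
    ext i
    refine Fin.lastCases ?_ (fun i => ?_) i
    · simp only [ι, Matrix.mulVecLin_apply, Matrix.mulVec, dotProduct,
        Fin.sum_univ_castSucc, hrow, Fin.snoc_castSucc, Fin.snoc_last, LinearMap.coe_mk,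
        AddHom.coe_mk, mul_zero, add_zero, Pi.single_eq_same, mul_one]
      refine (Finset.sum_eq_zero fun x _ => ?_).trans rfl
      rw [Pi.single_eq_of_ne (Fin.castSucc_lt_last x).ne, zero_mul]
    · simp [ι, Matrix.mulVecLin_apply, Matrix.mulVec, dotProduct,
        Fin.sum_univ_castSucc, hU]
  have hv : Cᵀ (Fin.last k) ∈ LinearMap.range C.mulVecLin := col_mem_colspan C _
  have hvS : Cᵀ (Fin.last k) ∉ S := by
    rintro ⟨y, hy, h⟩
    have h0 : (Cᵀ (Fin.last k)) (Fin.last m) = 0 := by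
      rw [← h]; simp [ι]
    rw [Matrix.transpose_apply, hrow] at h0
    simp at h0
  have hlt : S < S ⊔ Submodule.span F {Cᵀ (Fin.last k)} := by
    refine lt_of_le_of_ne le_sup_left (fun hEq => hvS ?_)
    rw [hEq]
    exact Submodule.mem_sup_right (Submodule.mem_span_singleton_self _)
  have h1 : finrank F ↥S < finrank F ↥(S ⊔ Submodule.span F {Cᵀ (Fin.last k)}) :=
    Submodule.finrank_lt_finrank_of_lt hlt
  have h2 : finrank F ↥(S ⊔ Submodule.span F {Cᵀ (Fin.last k)})
      ≤ finrank F ↥(LinearMap.range C.mulVecLin) := by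
    refine Submodule.finrank_mono (sup_le hS_le ?_)
    rw [Submodule.span_le, Set.singleton_subset_iff]
    exact hv
  have h3 : finrank F ↥S = U.rank := by
    rw [rank_def]
    exact ((LinearMap.range U.mulVecLin).equivMapOfInjective ι hinj).symm.finrank_eq
  have h4 : C.rank = finrank F ↥(LinearMap.range C.mulVecLin) := rfl
  omega

end AffFl

namespace AffFl

open Matrix
variable {F : Type*} [Field F] {q : ℕ}

lemma Qexists (ρ : Fin (q+1) → F) (hρ : ρ ≠ 0) :
    ∃ Q Q' : Matrix (Fin (q+1)) (Fin (q+1)) F,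
      Q * Q' = 1 ∧ Q' * Q = 1 ∧ ρ ᵥ* Q = Pi.single (Fin.last q) 1 := by
  classical
  obtain ⟨j₀, hj₀⟩ : ∃ j₀, ρ j₀ ≠ 0 := by
    by_contra h; push_neg at h; exact hρ (funext h)
  let φ : (Fin (q+1) → F) →ₗ[F] F :=
    { toFun := fun x => ρ ⬝ᵥ x
      map_add' := fun x y => dotProduct_add _ _ _
      map_smul' := fun c x => by simp }
  have hsurj : Function.Surjective φ := by
    intro c
    refine ⟨(fun j => if j = j₀ then c * (ρ j₀)⁻¹ else 0 : Fin (q+1) → F), ?_⟩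
    simp only [φ, LinearMap.coe_mk, AddHom.coe_mk, dotProduct, mul_ite, mul_zero,
      Finset.sum_ite_eq', Finset.mem_univ, if_true]
    field_simp
  have hker : finrank F ↥(LinearMap.ker φ) = q := by
    have h1 := LinearMap.finrank_range_add_finrank_ker φ
    rw [LinearMap.range_eq_top.mpr hsurj] at h1
    have h2 : finrank F (Fin (q+1) → F) = q + 1 := by
      simp [Module.finrank_pi]
    have h3 : finrank F ↥(⊤ : Submodule F F) = 1 := by
      simp [finrank_top]
    omega
  let bker : Basis (Fin q) F ↥(LinearMap.ker φ) := Module.finBasisOfFinrankEq F _ hker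
  obtain ⟨v₀, hv₀⟩ := hsurj 1
  let g : Fin (q+1) → (Fin (q+1) → F) := Fin.snoc (fun i => (bker i : Fin (q+1) → F)) v₀
  have hgli : LinearIndependent F g := by
    rw [linearIndependent_fin_snoc]
    constructor
    · exact bker.linearIndependent.map' (LinearMap.ker φ).subtype
        (Submodule.ker_subtype _)
    · intro hmem
      have hle : Submodule.span F (Set.range fun i => (bker i : Fin (q+1) → F))
          ≤ LinearMap.ker φ := by
        rw [Submodule.span_le]
        rintro _ ⟨i, rfl⟩
        exact (bker i).2
      have := hle hmem
      rw [LinearMap.mem_ker, hv₀] at this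
      exact one_ne_zero this
  have hcard : Fintype.card (Fin (q+1)) = finrank F (Fin (q+1) → F) := by
    simp [Module.finrank_pi]
  let bb : Basis (Fin (q+1)) F (Fin (q+1) → F) :=
    basisOfLinearIndependentOfCardEqFinrank hgli hcard
  have hbb : ⇑bb = g := coe_basisOfLinearIndependentOfCardEqFinrank _ _
  let e : Basis (Fin (q+1)) F (Fin (q+1) → F) := Pi.basisFun F (Fin (q+1))
  refine ⟨e.toMatrix bb, bb.toMatrix e, Basis.toMatrix_mul_toMatrix_flip _ _,
    Basis.toMatrix_mul_toMatrix_flip _ _, ?_⟩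
  funext j
  have hQ : ∀ i j, e.toMatrix bb i j = bb j i := by
    intro i j; simp [Basis.toMatrix_apply, e]
  have hval : (ρ ᵥ* e.toMatrix bb) j = φ (bb j) := by
    simp only [Matrix.vecMul, dotProduct, φ, LinearMap.coe_mk, AddHom.coe_mk]
    exact Finset.sum_congr rfl fun i _ => by rw [hQ i j]
  rw [hval, hbb]
  refine Fin.lastCases ?_ (fun j => ?_) j
  · simp only [g, Fin.snoc_last, hv₀, Pi.single_eq_same]
  · have hz : φ (g (Fin.castSucc j)) = 0 := by
      have : g (Fin.castSucc j) ∈ LinearMap.ker φ := by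
        simp only [g, Fin.snoc_castSucc]; exact (bker j).2
      rwa [LinearMap.mem_ker] at this
    rw [hz, Pi.single_eq_of_ne (Fin.castSucc_lt_last j).ne]
end AffFl

namespace AffFl

open Matrix
variable {F : Type*} [Field F] {m k : ℕ}

lemma transform (B : Matrix (Fin (m+1)) (Fin (k+1)) F) (hB : B ≠ 0) :
    ∃ T : Matrix (Fin (m+1)) (Fin (k+1)) F ≃ₗ[F] Matrix (Fin (m+1)) (Fin (k+1)) F,
      (∀ X, (T X).rank = X.rank) ∧ (T B) (Fin.last m) = Pi.single (Fin.last k) 1 := by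
  classical
  obtain ⟨i₀, j₀, hne⟩ : ∃ i₀ j₀, B i₀ j₀ ≠ 0 := by
    by_contra h; push_neg at h
    exact hB (by ext i j; exact h i j)
  set σ := Equiv.swap (Fin.last m) i₀ with hσ
  set P : Matrix (Fin (m+1)) (Fin (m+1)) F :=
    Matrix.of (fun a b => if b = σ a then (1:F) else 0) with hP
  have hPmul : ∀ (X : Matrix (Fin (m+1)) (Fin (k+1)) F) a j, (P * X) a j = X (σ a) j := by
    intro X a j
    simp [hP, Matrix.mul_apply, ite_mul, one_mul, zero_mul]
  have hPP : P * P = 1 := by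
    ext a c
    rw [Matrix.mul_apply]
    simp only [hP, Matrix.of_apply, ite_mul, one_mul, zero_mul,
      Finset.sum_ite_eq', Finset.mem_univ, if_true]
    rw [Matrix.one_apply]
    have hss : σ (σ a) = a := by rw [hσ]; exact Equiv.swap_apply_self _ _ _
    rw [hss]
    by_cases h : c = a
    · simp [h]
    · rw [if_neg h, if_neg (fun hh => h hh.symm)]
  set ρ := B i₀ with hρdef
  have hρ : ρ ≠ 0 := by
    intro h0; exact hne (by rw [hρdef] at h0; exact congrFun h0 j₀)
  obtain ⟨Q, Q', hQQ', hQ'Q, hvec⟩ := Qexists ρ hρ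
  have hPdet : IsUnit P.det :=
    IsUnit.of_mul_eq_one _ (by rw [← Matrix.det_mul, hPP, Matrix.det_one])
  have hQdet : IsUnit Q.det :=
    IsUnit.of_mul_eq_one _ (by rw [← Matrix.det_mul, hQQ', Matrix.det_one])
  let l : Matrix (Fin (m+1)) (Fin (k+1)) F →ₗ[F] Matrix (Fin (m+1)) (Fin (k+1)) F :=
    { toFun := fun X => P * X * Q
      map_add' := by intro X Y; simp [Matrix.mul_add, Matrix.add_mul]
      map_smul' := by intro c X; simp [Matrix.mul_smul, Matrix.smul_mul] }
  let r : Matrix (Fin (m+1)) (Fin (k+1)) F →ₗ[F] Matrix (Fin (m+1)) (Fin (k+1)) F :=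
    { toFun := fun X => P * X * Q'
      map_add' := by intro X Y; simp [Matrix.mul_add, Matrix.add_mul]
      map_smul' := by intro c X; simp [Matrix.mul_smul, Matrix.smul_mul] }
  have hlr : ∀ X, l (r X) = X := by
    intro X
    show P * (P * X * Q') * Q = X
    simp only [← Matrix.mul_assoc, hPP, Matrix.one_mul]
    rw [Matrix.mul_assoc, hQ'Q, Matrix.mul_one]
  have hrl : ∀ X, r (l X) = X := by
    intro X
    show P * (P * X * Q) * Q' = X
    simp only [← Matrix.mul_assoc, hPP, Matrix.one_mul]
    rw [Matrix.mul_assoc, hQQ', Matrix.mul_one]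
  refine ⟨LinearEquiv.ofLinear l r (LinearMap.ext hlr) (LinearMap.ext hrl), ?_, ?_⟩
  · intro X
    show (P * X * Q).rank = X.rank
    rw [Matrix.rank_mul_eq_left_of_isUnit_det Q (P * X) hQdet,
      Matrix.rank_mul_eq_right_of_isUnit_det P X hPdet]
  · show (P * B * Q) (Fin.last m) = _
    funext j
    have h1 : (P * B * Q) (Fin.last m) j = (ρ ᵥ* Q) j := by
      rw [Matrix.mul_apply]
      simp only [Matrix.vecMul, dotProduct]
      refine Finset.sum_congr rfl fun t _ => ?_
      rw [hPmul B (Fin.last m) t, hσ, Equiv.swap_apply_left, hρdef]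
    rw [h1, hvec]

end AffFl

namespace AffFl

open Matrix
variable (F : Type*) [Field F] (m k : ℕ)

def rowL : Matrix (Fin (m+1)) (Fin (k+1)) F →ₗ[F] (Fin (k+1) → F) where
  toFun M := M (Fin.last m)
  map_add' _ _ := rfl
  map_smul' _ _ := rfl

def dropL : Matrix (Fin (m+1)) (Fin (k+1)) F →ₗ[F] Matrix (Fin (m+1)) (Fin k) F where
  toFun M := M.submatrix id Fin.castSucc
  map_add' _ _ := rfl
  map_smul' _ _ := rfl

def ulL : Matrix (Fin (m+1)) (Fin (k+1)) F →ₗ[F] Matrix (Fin m) (Fin k) F where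
  toFun M := M.submatrix Fin.castSucc Fin.castSucc
  map_add' _ _ := rfl
  map_smul' _ _ := rfl

def colL : Matrix (Fin (m+1)) (Fin (k+1)) F →ₗ[F] (Fin (m+1) → F) where
  toFun M := fun i => M i (Fin.last k)
  map_add' _ _ := rfl
  map_smul' _ _ := rfl

def entryL : Matrix (Fin (m+1)) (Fin (k+1)) F →ₗ[F] F where
  toFun M := M (Fin.last m) (Fin.last k)
  map_add' _ _ := rfl
  map_smul' _ _ := rfl

variable {F m k}

theorem flandersCore (r : ℕ) (hrk1 : r + 1 ≤ k) (hkm : k ≤ m)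
    (IH : ∀ (n p : ℕ), r ≤ p → p ≤ n → ∀ (A : Matrix (Fin n) (Fin p) F)
      (V : Submodule F (Matrix (Fin n) (Fin p) F)),
      (∀ M ∈ V, (A + M).rank ≤ r) → finrank F ↥V ≤ n * r)
    (B : Matrix (Fin (m+1)) (Fin (k+1)) F)
    (hBrow : B (Fin.last m) = Pi.single (Fin.last k) 1)
    (V : Submodule F (Matrix (Fin (m+1)) (Fin (k+1)) F))
    (hyp : ∀ M ∈ V, (B + M).rank ≤ r + 1) :
    finrank F ↥V ≤ (m+1) * (r+1) := by
  classical
  have hsubrank : ∀ C : Matrix (Fin (m+1)) (Fin (k+1)) F,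
      (dropL F m k C).rank ≤ C.rank := by
    intro C
    rw [rank_def, rank_def]
    exact Submodule.finrank_mono (colspan_drop_le C)
  by_cases hb1 : ∀ M ∈ V, (dropL F m k (B + M)).rank ≤ r
  · -- case b1 : dropping the last column already has rank ≤ r everywhere
    have h1 := finrank_split (dropL F m k) V
    have hIH : finrank F ↥(V.map (dropL F m k)) ≤ (m+1) * r := by
      refine IH (m+1) k (by omega) (by omega) (dropL F m k B) _ ?_
      rintro _ ⟨M, hM, rfl⟩
      rw [← map_add]
      exact hb1 M hM
    have h2 := finrank_split (colL F m k) (V ⊓ LinearMap.ker (dropL F m k))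
    have hbot2 : V ⊓ LinearMap.ker (dropL F m k) ⊓ LinearMap.ker (colL F m k) = ⊥ := by
      refine le_bot_iff.mp ?_
      rintro M ⟨⟨hMV, hdrop⟩, hcol⟩
      have hdrop0 : M.submatrix id Fin.castSucc = (0 : Matrix (Fin (m+1)) (Fin k) F) := hdrop
      have hcol0 : (fun i => M i (Fin.last k)) = (0 : Fin (m+1) → F) := hcol
      simp only [Submodule.mem_bot]
      ext i j
      refine Fin.lastCases ?_ (fun j => ?_) j
      · exact congrFun hcol0 i
      · exact congrFun (congrFun hdrop0 i) j
    have h3 : finrank F ↥((V ⊓ LinearMap.ker (dropL F m k)).map (colL F m k)) ≤ m + 1 :=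
      (Submodule.finrank_le _).trans_eq (by simp [Module.finrank_pi])
    rw [hbot2] at h2
    have hb0 : finrank F ↥(⊥ : Submodule F (Matrix (Fin (m+1)) (Fin (k+1)) F)) = 0 := by simp
    have hring : (m+1) * (r+1) = (m+1) * r + (m+1) := by ring
    omega
  · -- case b2
    push_neg at hb1
    obtain ⟨M₀, hM₀V, hM₀⟩ := hb1
    have hC₀rank : (dropL F m k (B + M₀)).rank = r + 1 :=
      le_antisymm ((hsubrank _).trans (hyp _ hM₀V)) hM₀
    set K₂ : Submodule F (Matrix (Fin (m+1)) (Fin (k+1)) F) :=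
      V ⊓ LinearMap.ker (rowL F m k) ⊓ LinearMap.ker (ulL F m k) with hK₂def
    have hK₂drop : ∀ M ∈ K₂, dropL F m k M = 0 := by
      rintro M ⟨⟨hMV, hMrow⟩, hMul⟩
      ext i j
      refine Fin.lastCases ?_ (fun i => ?_) i
      · exact congrFun hMrow (Fin.castSucc j)
      · exact congrFun (congrFun hMul i) j
    -- general Claim A
    have claimA : ∀ M1, M1 ∈ V → (dropL F m k (B + M1)).rank = r + 1 →
        (∀ N ∈ K₂, colL F m k ((B + M1) + N)
          ∈ LinearMap.range (dropL F m k (B + M1)).mulVecLin) := by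
      intro M1 hM1 hrank1 N hN
      have hNsub : N.submatrix id Fin.castSucc = (0 : Matrix (Fin (m+1)) (Fin k) F) :=
        hK₂drop N hN
      have hr2 : ((B + M1) + N).rank ≤ ((B + M1).submatrix id Fin.castSucc).rank := by
        have h3 : (B + M1) + N = B + (M1 + N) := by rw [add_assoc]
        have h4 : ((B + M1) + N).rank ≤ r + 1 := by
          rw [h3]; exact hyp _ (V.add_mem hM1 hN.1.1)
        have h5 : ((B + M1).submatrix id Fin.castSucc).rank = r + 1 := hrank1
        omega
      have habs := colspan_absorb (B + M1) N hNsub hr2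
      have hcol := col_mem_colspan ((B + M1) + N) (Fin.last k)
      rw [← habs] at hcol
      exact hcol
    -- colL of members of K₂ lies in Y
    have claimA' : ∀ M1, M1 ∈ V → (dropL F m k (B + M1)).rank = r + 1 →
        (∀ N ∈ K₂, colL F m k N
          ∈ LinearMap.range (dropL F m k (B + M1)).mulVecLin) := by
      intro M1 hM1 hrank1 N hN
      have h1 := claimA M1 hM1 hrank1 N hN
      have h0 := claimA M1 hM1 hrank1 0 K₂.zero_mem
      rw [add_zero] at h0
      rw [map_add] at h1
      simpa using Submodule.sub_mem _ h1 h0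
    set W₂ := K₂.map (colL F m k) with hW₂def
    have hW₂le : ∀ M1, M1 ∈ V → (dropL F m k (B + M1)).rank = r + 1 →
        W₂ ≤ LinearMap.range (dropL F m k (B + M1)).mulVecLin := by
      rintro M1 hM1 hrank1 _ ⟨N, hN, rfl⟩
      exact claimA' M1 hM1 hrank1 N hN
    have hκ_le : finrank F ↥W₂ ≤ r + 1 := by
      have := Submodule.finrank_mono (hW₂le M₀ hM₀V hC₀rank)
      rw [← rank_def] at this
      omega
    have hK₂W₂ : finrank F ↥K₂ = finrank F ↥W₂ := by
      have hsp := finrank_split (colL F m k) K₂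
      have hbot : K₂ ⊓ LinearMap.ker (colL F m k) = ⊥ := by
        refine le_bot_iff.mp ?_
        rintro M ⟨⟨⟨hMV, hMrow⟩, hMul⟩, hcol⟩
        have hrow0 : M (Fin.last m) = (0 : Fin (k+1) → F) := hMrow
        have hul0 : M.submatrix Fin.castSucc Fin.castSucc = (0 : Matrix (Fin m) (Fin k) F) := hMul
        have hcol0 : (fun i => M i (Fin.last k)) = (0 : Fin (m+1) → F) := hcol
        simp only [Submodule.mem_bot]
        ext i j
        refine Fin.lastCases ?_ (fun j => ?_) j
        · exact congrFun hcol0 i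
        · refine Fin.lastCases ?_ (fun i => ?_) i
          · exact congrFun hrow0 (Fin.castSucc j)
          · exact congrFun (congrFun hul0 i) j
      rw [hbot] at hsp
      have hb0 : finrank F ↥(⊥ : Submodule F (Matrix (Fin (m+1)) (Fin (k+1)) F)) = 0 := by simp
      rw [← hW₂def] at hsp
      omega
    by_cases hκ : finrank F ↥W₂ ≤ r
    · -- small kappa case
      have h1 := finrank_split (rowL F m k) V
      have h2 := finrank_split (ulL F m k) (V ⊓ LinearMap.ker (rowL F m k))
      have hrow_le : finrank F ↥(V.map (rowL F m k)) ≤ k + 1 :=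
        (Submodule.finrank_le _).trans_eq (by simp [Module.finrank_pi])
      have hul : finrank F ↥((V ⊓ LinearMap.ker (rowL F m k)).map (ulL F m k)) ≤ m * r := by
        refine IH m k (by omega) (by omega) (ulL F m k B) _ ?_
        rintro _ ⟨M, ⟨hMV, hMrow⟩, rfl⟩
        rw [← map_add]
        have h0 : M (Fin.last m) = (0 : Fin (k+1) → F) := hMrow
        have hrowBM : (B + M) (Fin.last m) = Pi.single (Fin.last k) 1 := by
          rw [show (B + M) (Fin.last m) = B (Fin.last m) + M (Fin.last m) from rfl,
            h0, add_zero, hBrow]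
        have hru := rank_ul (B + M) hrowBM
        have hy := hyp M hMV
        have e : ulL F m k (B + M) = (B + M).submatrix Fin.castSucc Fin.castSucc := rfl
        rw [e]
        omega
      rw [← hK₂def] at h2
      have hring : (m+1) * (r+1) = m * r + m + r + 1 := by ring
      omega
    · -- kappa = r + 1 case
      have hκeq : finrank F ↥W₂ = r + 1 := le_antisymm hκ_le (by omega)
      have hW₂H : ∀ x ∈ W₂, x (Fin.last m) = 0 := by
        rintro _ ⟨N, hN, rfl⟩
        have h0 : N (Fin.last m) = (0 : Fin (k+1) → F) := hN.1.2
        show N (Fin.last m) (Fin.last k) = 0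
        rw [h0]
        rfl
      have claimB : ∀ M ∈ V, (B + M) (Fin.last m) (Fin.last k) ≠ 0 →
          (dropL F m k (B + M)).rank ≤ r := by
        intro M hMV hne
        by_contra hgt
        have heq : (dropL F m k (B + M)).rank = r + 1 :=
          le_antisymm ((hsubrank _).trans (hyp M hMV)) (by omega)
        have hle := hW₂le M hMV heq
        have hYfin : finrank F ↥(LinearMap.range (dropL F m k (B + M)).mulVecLin) = r + 1 := by
          rw [← rank_def]; exact heq
        have hYeq : W₂ = LinearMap.range (dropL F m k (B + M)).mulVecLin :=
          Submodule.eq_of_le_of_finrank_le hle (by omega)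
        have hcol := claimA M hMV heq 0 K₂.zero_mem
        rw [add_zero, ← hYeq] at hcol
        exact hne (hW₂H _ hcol)
      set V'' := V ⊓ LinearMap.ker (entryL F m k) with hV''def
      have h1 := finrank_split (entryL F m k) V
      rw [← hV''def] at h1
      have hentry : finrank F ↥(V.map (entryL F m k)) ≤ 1 :=
        (Submodule.finrank_le _).trans_eq (Module.finrank_self F)
      have h2 := finrank_split (dropL F m k) V''
      have hIH2 : finrank F ↥(V''.map (dropL F m k)) ≤ (m+1) * r := by
        refine IH (m+1) k (by omega) (by omega) (dropL F m k B) _ ?_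
        rintro _ ⟨M, hM, rfl⟩
        rw [← map_add]
        refine claimB M hM.1 ?_
        have h0 : M (Fin.last m) (Fin.last k) = 0 := hM.2
        have hBll : B (Fin.last m) (Fin.last k) = 1 := by rw [hBrow]; simp
        rw [show (B + M) (Fin.last m) (Fin.last k)
            = B (Fin.last m) (Fin.last k) + M (Fin.last m) (Fin.last k) from rfl,
          hBll, h0, add_zero]
        exact one_ne_zero
      have hK₂eq : V'' ⊓ LinearMap.ker (dropL F m k) = K₂ := by
        apply le_antisymm
        · rintro M ⟨⟨hMV, hMent⟩, hMdrop⟩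
          have hdrop0 : M.submatrix id Fin.castSucc = (0 : Matrix (Fin (m+1)) (Fin k) F) :=
            hMdrop
          have hent0 : M (Fin.last m) (Fin.last k) = 0 := hMent
          refine ⟨⟨hMV, ?_⟩, ?_⟩
          · show M (Fin.last m) = (0 : Fin (k+1) → F)
            funext j
            refine Fin.lastCases ?_ (fun j => ?_) j
            · exact hent0
            · exact congrFun (congrFun hdrop0 (Fin.last m)) j
          · show M.submatrix Fin.castSucc Fin.castSucc = (0 : Matrix (Fin m) (Fin k) F)
            ext i j
            exact congrFun (congrFun hdrop0 (Fin.castSucc i)) j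
        · intro M hM
          refine ⟨⟨hM.1.1, ?_⟩, ?_⟩
          · have h0 : M (Fin.last m) = (0 : Fin (k+1) → F) := hM.1.2
            show M (Fin.last m) (Fin.last k) = 0
            rw [h0]; rfl
          · show dropL F m k M = 0
            exact hK₂drop M hM
      rw [hK₂eq] at h2
      have hring : (m+1) * (r+1) = (m+1) * r + m + 1 := by ring
      have hm : r + 1 ≤ m := le_trans hrk1 hkm
      omega

end AffFl

namespace AffFl

open Matrix
variable {F : Type*} [Field F]

theorem flandersMain (r : ℕ) : ∀ (n p : ℕ), r ≤ p → p ≤ n →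
    ∀ (A : Matrix (Fin n) (Fin p) F) (V : Submodule F (Matrix (Fin n) (Fin p) F)),
    (∀ M ∈ V, (A + M).rank ≤ r) → finrank F ↥V ≤ n * r := by
  induction r with
  | zero =>
    intro n p h0 hpn A V hyp
    have hz : ∀ C : Matrix (Fin n) (Fin p) F, C.rank = 0 → C = 0 := by
      intro C hC
      rw [rank_def] at hC
      have hbot : LinearMap.range C.mulVecLin = ⊥ := Submodule.finrank_eq_zero.mp hC
      ext i j
      have hcol := col_mem_colspan C j
      rw [hbot, Submodule.mem_bot] at hcol
      have := congrFun hcol i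
      simpa using this
    have hA : A = 0 := by
      have := hz A (Nat.le_zero.mp (by simpa using hyp 0 V.zero_mem))
      exact this
    have hVbot : V = ⊥ := by
      refine le_bot_iff.mp fun M hM => ?_
      have := hz (A + M) (Nat.le_zero.mp (hyp M hM))
      rw [hA, zero_add] at this
      simpa using this
    rw [hVbot]
    simp
  | succ r IH =>
    intro n p hrp hpn A V hyp
    by_cases hp : p ≤ r + 1
    · have hpe : p = r + 1 := le_antisymm hp hrp
      subst hpe
      have hle := Submodule.finrank_le V
      have hmat : finrank F (Matrix (Fin n) (Fin (r+1)) F) = n * (r+1) := by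
        rw [Module.finrank_matrix]
        simp
      omega
    · push_neg at hp
      by_cases hall : ∀ M ∈ V, (A + M).rank ≤ r
      · exact (IH n p (by omega) hpn A V hall).trans (Nat.mul_le_mul_left n (by omega))
      · push_neg at hall
        obtain ⟨M₀, hM₀V, hM₀⟩ := hall
        obtain ⟨k, rfl⟩ : ∃ k, p = k + 1 := ⟨p - 1, by omega⟩
        obtain ⟨m, rfl⟩ : ∃ m, n = m + 1 := ⟨n - 1, by omega⟩
        set B := A + M₀ with hBdef
        have hBne : B ≠ 0 := by
          intro h0
          rw [h0, Matrix.rank_zero] at hM₀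
          omega
        obtain ⟨T, hTrank, hTrow⟩ := transform B hBne
        set V₂ := V.map T.toLinearMap with hV₂def
        have hdim : finrank F ↥V₂ = finrank F ↥V := LinearEquiv.finrank_map_eq T V
        have hyp₂ : ∀ M ∈ V₂, (T B + M).rank ≤ r + 1 := by
          rintro _ ⟨M', hM', rfl⟩
          show (T B + T M').rank ≤ r + 1
          rw [← map_add, hTrank]
          rw [show B + M' = A + (M₀ + M') by rw [hBdef, add_assoc]]
          exact hyp _ (V.add_mem hM₀V hM')
        have hcore := flandersCore r (by omega) (by omega) IH (T B) hTrow V₂ hyp₂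
        omega

end AffFl

/-- Affine Flanders inequality: an affine subspace `A + V` of `Mat_{n,p}(F)`
(`n ≥ p ≥ r`) in which every matrix has rank at most `r` has dimension at most `nr`. -/
theorem affine_flanders_inequality (F : Type*) [Field F] (n p r : ℕ)
    (hrp : r ≤ p) (hpn : p ≤ n)
    (A : Matrix (Fin n) (Fin p) F) (V : Submodule F (Matrix (Fin n) (Fin p) F))
    (hrk : ∀ M ∈ (A + ·) '' (V : Set (Matrix (Fin n) (Fin p) F)), Matrix.rank M ≤ r) :
    Module.finrank F V ≤ n * r := by
  exact AffFl.flandersMain r n p hrp hpn A V (fun M hM => hrk (A + M) ⟨M, hM, rfl⟩)
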